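/- Let A be the ambiguity function A(u)(x,y) = ∫_ℝ u(t + x/2) · conj(u(t − x/2)) · e^{−2πi t y} dt for u ∈ L²(ℝ). Then for any u, v ∈ L²(ℝ), A(v) = A(u) if and only if there exists c ∈ ℂ with |c| = 1 such that v = c·u. -/

import Mathlib

open MeasureTheory

/-- The ambiguity function of `u`:
`A(u)(x,y) = ∫ u(t + x/2) conj (u(t - x/2)) e^{-2iπ t y} dt`. -/
noncomputable def amb (u : ℝ → ℂ) (x y : ℝ) : ℂ :=
  ∫ t : ℝ, u (t + x / 2) * (starRingEnd ℂ) (u (t - x / 2)) *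
    Complex.exp (-2 * (Real.pi : ℂ) * Complex.I * (t : ℂ) * (y : ℂ))

/-- The fractional Fourier transform of order `α`.  For `sin α ≠ 0` it is given by
`F_α u(ξ) = c_α e^{-iπ ξ² cot α} ∫ u(t) e^{-iπ t² cot α} e^{-2iπ t ξ / sin α} dt`
with `c_α = e^{i(α - π/2)/2} / √|sin α|`; for `α ∈ πℤ` it is `u(± ξ) = u(cos α · ξ)`. -/
noncomputable def frft (α : ℝ) (u : ℝ → ℂ) : ℝ → ℂ :=
  if Real.sin α = 0 then fun ξ => u (Real.cos α * ξ)
  else fun ξ =>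
    (Complex.exp (Complex.I * ((α : ℂ) - (Real.pi : ℂ) / 2) / 2) /
        (Real.sqrt |Real.sin α| : ℂ)) *
      Complex.exp (-(Real.pi : ℂ) * Complex.I * (ξ : ℂ) ^ 2 *
        ((Real.cos α / Real.sin α : ℝ) : ℂ)) *
      ∫ t : ℝ, u t *
        Complex.exp (-(Real.pi : ℂ) * Complex.I * (t : ℂ) ^ 2 *
          ((Real.cos α / Real.sin α : ℝ) : ℂ)) *
        Complex.exp (-2 * (Real.pi : ℂ) * Complex.I * (t : ℂ) * (ξ : ℂ) /
          ((Real.sin α : ℝ) : ℂ))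


open scoped FourierTransform

section AmbAux

/-- A smooth compactly supported function as a Schwartz map. -/
noncomputable def ambToSchwartz (f : ℝ → ℂ) (h1 : ContDiff ℝ ((⊤ : ℕ∞) : WithTop ℕ∞) f)
    (h2 : HasCompactSupport f) : SchwartzMap ℝ ℂ where
  toFun := f
  smooth' := h1
  decay' := by
    intro k n
    have hcont : Continuous fun x : ℝ => ‖x‖ ^ k * ‖iteratedFDeriv ℝ n f x‖ :=
      ((continuous_norm).pow k).mul (h1.continuous_iteratedFDeriv (mod_cast le_top)).norm
    have hsupp : HasCompactSupport fun x : ℝ => ‖x‖ ^ k * ‖iteratedFDeriv ℝ n f x‖ :=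
      ((h2.iteratedFDeriv n).norm).mul_left
    obtain ⟨C, hC⟩ := hsupp.exists_bound_of_continuous hcont
    exact ⟨C, fun x => le_trans (le_trans (le_abs_self _) (Real.norm_eq_abs _).symm.le) (hC x)⟩

@[simp] lemma ambToSchwartz_coe (f : ℝ → ℂ) (h1 : ContDiff ℝ ((⊤ : ℕ∞) : WithTop ℕ∞) f)
    (h2 : HasCompactSupport f) : ⇑(ambToSchwartz f h1 h2) = f := rfl

/-- Injectivity of the Fourier transform on `L¹`. -/
lemma ae_zero_of_fourier_zero {g : ℝ → ℂ} (hg : Integrable g volume)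
    (h : ∀ y : ℝ, 𝓕 g y = 0) : g =ᵐ[volume] 0 := by
  apply ae_eq_zero_of_integral_contDiff_smul_eq_zero hg.locallyIntegrable
  intro φ hφ hφc
  have h1 : ContDiff ℝ ((⊤ : ℕ∞) : WithTop ℕ∞) (fun x : ℝ => (φ x : ℂ)) :=
    Complex.ofRealCLM.contDiff.comp hφ
  have h2 : HasCompactSupport (fun x : ℝ => (φ x : ℂ)) :=
    hφc.comp_left (g := fun r : ℝ => (r : ℂ)) (by simp)
  set Φ := ambToSchwartz _ h1 h2 with hΦ
  set ψ := (FourierTransform.fourierCLE ℝ (SchwartzMap ℝ ℂ)).symm Φ with hψdef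
  have hψ : 𝓕 ⇑ψ = fun x : ℝ => (φ x : ℂ) := by
    have h3 : (FourierTransform.fourierCLE ℝ (SchwartzMap ℝ ℂ)) ψ = Φ :=
      (FourierTransform.fourierCLE ℝ (SchwartzMap ℝ ℂ)).apply_symm_apply Φ
    have h4 : ⇑((FourierTransform.fourierCLE ℝ (SchwartzMap ℝ ℂ)) ψ) = 𝓕 ⇑ψ := by
      rw [FourierTransform.fourierCLE_apply, SchwartzMap.fourier_coe]
    rw [h3] at h4
    rw [← h4, hΦ, ambToSchwartz_coe]
  have key := VectorFourier.integral_fourierIntegral_smul_eq_flip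
    (μ := (volume : Measure ℝ)) (ν := (volume : Measure ℝ)) (L := innerₗ ℝ)
    Real.continuous_fourierChar continuous_inner ψ.integrable hg
  rw [flip_innerₗ] at key
  have key2 : ∫ ξ : ℝ, (𝓕 ⇑ψ) ξ • g ξ = ∫ x : ℝ, ψ x • 𝓕 g x := key
  rw [hψ] at key2
  simp only [h, smul_zero, integral_zero] at key2
  simpa only [Complex.real_smul, smul_eq_mul] using key2

lemma memLp_translate {w : ℝ → ℂ} (hw : MemLp w 2 (volume : Measure ℝ)) (c : ℝ) :
    MemLp (fun t => w (t + c)) 2 (volume : Measure ℝ) :=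
  hw.comp_measurePreserving (measurePreserving_add_right volume c)

lemma memLp_conj {w : ℝ → ℂ} (hw : MemLp w 2 (volume : Measure ℝ)) :
    MemLp (fun t => (starRingEnd ℂ) (w t)) 2 (volume : Measure ℝ) :=
  hw.of_le (Complex.continuous_conj.comp_aestronglyMeasurable hw.1)
    (Filter.Eventually.of_forall fun t => by simp)

lemma integrable_pair {w : ℝ → ℂ} (hw : MemLp w 2 (volume : Measure ℝ)) (s : ℝ) :
    Integrable (fun t => w (t + s) * (starRingEnd ℂ) (w (t - s))) volume := by
  have h1 : MemLp (fun t => w (t + s)) 2 (volume : Measure ℝ) := memLp_translate hw s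
  have h2 : MemLp (fun t => (starRingEnd ℂ) (w (t - s))) 2 (volume : Measure ℝ) := by
    have := memLp_conj (memLp_translate hw (-s))
    simpa [sub_eq_add_neg] using this
  have h3 : MemLp ((fun t => w (t + s)) • fun t => (starRingEnd ℂ) (w (t - s))) 1
      (volume : Measure ℝ) := h2.smul h1 (hpqr := ⟨?hpqr⟩)
  case hpqr =>
    rw [ENNReal.inv_two_add_inv_two, inv_one]
  rw [← memLp_one_iff_integrable]
  exact h3

lemma fourier_pair_eq_amb (w : ℝ → ℂ) (s y : ℝ) :
    𝓕 (fun t => w (t + s) * (starRingEnd ℂ) (w (t - s))) y = amb w (2 * s) y := by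
  rw [Real.fourier_eq', amb]
  apply integral_congr_ae
  filter_upwards with t
  have hs : 2 * s / 2 = s := by ring
  rw [hs, smul_eq_mul]
  rw [mul_comm]
  congr 1
  rw [RCLike.inner_apply]
  simp only [starRingEnd_apply, star_trivial]
  push_cast
  ring_nf

lemma pair_ae_eq {u v : ℝ → ℂ} (hu : MemLp u 2 (volume : Measure ℝ))
    (hv : MemLp v 2 (volume : Measure ℝ))
    (h : ∀ x y : ℝ, amb v x y = amb u x y) (s : ℝ) :
    (fun t => v (t + s) * (starRingEnd ℂ) (v (t - s))) =ᵐ[volume]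
      (fun t => u (t + s) * (starRingEnd ℂ) (u (t - s))) := by
  set gv := fun t => v (t + s) * (starRingEnd ℂ) (v (t - s)) with hgv
  set gu := fun t => u (t + s) * (starRingEnd ℂ) (u (t - s)) with hgu
  have hgvI : Integrable gv volume := integrable_pair hv s
  have hguI : Integrable gu volume := integrable_pair hu s
  have key : (gv - gu) =ᵐ[volume] 0 := by
    apply ae_zero_of_fourier_zero (hgvI.sub hguI)
    intro y
    have hsub : 𝓕 (gv - gu) y = 𝓕 gv y - 𝓕 gu y := by
      simp only [Real.fourier_eq, Pi.sub_apply, smul_sub]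
      exact integral_sub ((Real.fourierIntegral_convergent_iff y).2 hgvI)
        ((Real.fourierIntegral_convergent_iff y).2 hguI)
    rw [hsub, fourier_pair_eq_amb, fourier_pair_eq_amb, h, sub_self]
  filter_upwards [key] with t ht
  have ht' : gv t - gu t = 0 := ht
  exact sub_eq_zero.mp ht'

lemma ae_comp_mp {f : ℝ → ℝ} (hf : MeasurePreserving f volume volume) {P : ℝ → Prop}
    (h : ∀ᵐ y, P y) : ∀ᵐ x, P (f x) := by
  rw [ae_iff] at h ⊢
  exact hf.quasiMeasurePreserving.preimage_null h

lemma amb_exists_const {u' v' : ℝ → ℂ} (hum : StronglyMeasurable u') (hvm : StronglyMeasurable v')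
    (hQ : ∀ s : ℝ, (fun t => v' (t + s) * (starRingEnd ℂ) (v' (t - s))) =ᵐ[volume]
      (fun t => u' (t + s) * (starRingEnd ℂ) (u' (t - s)))) :
    ∃ c : ℂ, ‖c‖ = 1 ∧ v' =ᵐ[volume] fun t => c * u' t := by
  have hQ' : ∀ d : ℝ, ∀ᵐ b : ℝ, v' (b + d) * (starRingEnd ℂ) (v' b) =
      u' (b + d) * (starRingEnd ℂ) (u' b) := by
    intro d
    have h1 := hQ (d / 2)
    have h2 := ae_comp_mp (measurePreserving_add_right volume (d / 2))
      (P := fun t => v' (t + d / 2) * (starRingEnd ℂ) (v' (t - d / 2)) =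
        u' (t + d / 2) * (starRingEnd ℂ) (u' (t - d / 2))) h1
    filter_upwards [h2] with b hb
    have e1 : b + d / 2 + d / 2 = b + d := by ring
    have e2 : b + d / 2 - d / 2 = b := by ring
    rwa [e1, e2] at hb
  have hnorm : ∀ᵐ b : ℝ, ‖v' b‖ = ‖u' b‖ := by
    filter_upwards [hQ' 0] with b hb
    rw [add_zero, Complex.mul_conj, Complex.mul_conj] at hb
    have h2 : Complex.normSq (v' b) = Complex.normSq (u' b) := by exact_mod_cast hb
    rw [Complex.normSq_eq_norm_sq, Complex.normSq_eq_norm_sq] at h2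
    have h3 := congrArg Real.sqrt h2
    rwa [Real.sqrt_sq (norm_nonneg _), Real.sqrt_sq (norm_nonneg _)] at h3
  have hS : MeasurableSet {p : ℝ × ℝ | ¬ (v' p.2 * (starRingEnd ℂ) (v' p.1) =
      u' p.2 * (starRingEnd ℂ) (u' p.1))} := by
    apply MeasurableSet.compl
    apply measurableSet_eq_fun
    · exact (hvm.measurable.comp measurable_snd).mul
        (Complex.continuous_conj.measurable.comp (hvm.measurable.comp measurable_fst))
    · exact (hum.measurable.comp measurable_snd).mul
        (Complex.continuous_conj.measurable.comp (hum.measurable.comp measurable_fst))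
  have hSnull : (volume.prod volume)
      {p : ℝ × ℝ | ¬ (v' p.2 * (starRingEnd ℂ) (v' p.1) =
        u' p.2 * (starRingEnd ℂ) (u' p.1))} = 0 := by
    have hmp : MeasurePreserving (fun z : ℝ × ℝ => (z.2, z.2 + z.1))
        ((volume : Measure ℝ).prod volume) ((volume : Measure ℝ).prod volume) :=
      measurePreserving_prod_add_swap volume volume
    rw [← hmp.measure_preimage hS.nullMeasurableSet]
    have hpre : MeasurableSet ((fun z : ℝ × ℝ => (z.2, z.2 + z.1)) ⁻¹'
        {p : ℝ × ℝ | ¬ (v' p.2 * (starRingEnd ℂ) (v' p.1) =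
          u' p.2 * (starRingEnd ℂ) (u' p.1))}) :=
      hS.preimage (measurable_snd.prodMk (measurable_snd.add measurable_fst))
    rw [Measure.measure_prod_null hpre]
    refine Filter.Eventually.of_forall fun d => ?_
    have hd := ae_iff.mp (hQ' d)
    exact hd
  have hae : ∀ᵐ a : ℝ, ∀ᵐ b : ℝ, v' b * (starRingEnd ℂ) (v' a) =
      u' b * (starRingEnd ℂ) (u' a) := by
    have h1 : ∀ᵐ z ∂((volume : Measure ℝ).prod volume),
        v' z.2 * (starRingEnd ℂ) (v' z.1) = u' z.2 * (starRingEnd ℂ) (u' z.1) :=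
      ae_iff.mpr hSnull
    exact Measure.ae_ae_of_ae_prod h1
  by_cases hu0 : u' =ᵐ[volume] 0
  · refine ⟨1, by simp, ?_⟩
    filter_upwards [hu0, hnorm] with t h1 h2
    rw [h1] at h2 ⊢
    simp only [Pi.zero_apply, norm_zero] at h2
    simp [norm_eq_zero.mp h2]
  · have hA : volume {a : ℝ | u' a ≠ 0} ≠ 0 := by
      intro hc
      exact hu0 (ae_iff.mpr hc)
    have hbad : volume {a : ℝ | ¬ ((∀ᵐ b : ℝ, v' b * (starRingEnd ℂ) (v' a) =
        u' b * (starRingEnd ℂ) (u' a)) ∧ ‖v' a‖ = ‖u' a‖)} = 0 := by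
      have h1 := hae.and hnorm
      exact ae_iff.mp h1
    have hex : ∃ a : ℝ, u' a ≠ 0 ∧ (∀ᵐ b : ℝ, v' b * (starRingEnd ℂ) (v' a) =
        u' b * (starRingEnd ℂ) (u' a)) ∧ ‖v' a‖ = ‖u' a‖ := by
      by_contra hc
      push_neg at hc
      apply hA
      apply measure_mono_null _ hbad
      intro a ha
      simp only [Set.mem_setOf_eq] at ha ⊢
      intro ⟨hb1, hb2⟩
      exact (hc a ha hb1) hb2
    obtain ⟨a₀, ha₀ne, ha₀Q, ha₀n⟩ := hex
    have hv₀ : v' a₀ ≠ 0 := by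
      intro hc
      rw [hc, norm_zero] at ha₀n
      exact ha₀ne (norm_eq_zero.mp ha₀n.symm)
    refine ⟨(starRingEnd ℂ) (u' a₀) / (starRingEnd ℂ) (v' a₀), ?_, ?_⟩
    · rw [norm_div]
      simp only [RCLike.norm_conj]
      rw [← ha₀n, div_self]
      simpa using hv₀
    · filter_upwards [ha₀Q] with b hb
      have hcv : (starRingEnd ℂ) (v' a₀) ≠ 0 := by simpa using hv₀
      field_simp
      linear_combination hb

end AmbAux

/-- Two L² functions have the same ambiguity function if and only if they agree up to a
constant phase factor. -/
theorem amb_eq_iff_unimodular_multiple (u v : ℝ → ℂ)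
    (hu : MeasureTheory.MemLp u 2 MeasureTheory.volume)
    (hv : MeasureTheory.MemLp v 2 MeasureTheory.volume) :
    (∀ x y : ℝ, amb v x y = amb u x y) ↔
      ∃ c : ℂ, ‖c‖ = 1 ∧ v =ᵐ[MeasureTheory.volume] fun t => c * u t := by
  constructor
  · intro h
    have hu'ae : u =ᵐ[volume] hu.1.mk u := hu.1.ae_eq_mk
    have hv'ae : v =ᵐ[volume] hv.1.mk v := hv.1.ae_eq_mk
    have hQ : ∀ s : ℝ,
        (fun t => (hv.1.mk v) (t + s) * (starRingEnd ℂ) ((hv.1.mk v) (t - s))) =ᵐ[volume]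
        (fun t => (hu.1.mk u) (t + s) * (starRingEnd ℂ) ((hu.1.mk u) (t - s))) := by
      intro s
      have hp := pair_ae_eq hu hv h s
      have tv1 := (measurePreserving_add_right volume s).quasiMeasurePreserving.ae_eq_comp hv'ae
      have tv2 := (measurePreserving_sub_right volume s).quasiMeasurePreserving.ae_eq_comp hv'ae
      have tu1 := (measurePreserving_add_right volume s).quasiMeasurePreserving.ae_eq_comp hu'ae
      have tu2 := (measurePreserving_sub_right volume s).quasiMeasurePreserving.ae_eq_comp hu'ae
      filter_upwards [hp, tv1, tv2, tu1, tu2] with t h0 e1 e2 e3 e4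
      have e1' : v (t + s) = (hv.1.mk v) (t + s) := e1
      have e2' : v (t - s) = (hv.1.mk v) (t - s) := e2
      have e3' : u (t + s) = (hu.1.mk u) (t + s) := e3
      have e4' : u (t - s) = (hu.1.mk u) (t - s) := e4
      rw [← e1', ← e2', ← e3', ← e4']
      exact h0
    obtain ⟨c, hc, hvc'⟩ := amb_exists_const hu.1.stronglyMeasurable_mk
      hv.1.stronglyMeasurable_mk hQ
    refine ⟨c, hc, ?_⟩
    filter_upwards [hv'ae, hu'ae, hvc'] with t h1 h2 h3
    rw [h1, h3, h2]
  · rintro ⟨c, hc, hvc⟩ x y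
    have hc1 : c * (starRingEnd ℂ) c = 1 := by
      rw [Complex.mul_conj]
      have hn : Complex.normSq c = 1 := by
        rw [Complex.normSq_eq_norm_sq, hc, one_pow]
      rw [hn]
      norm_num
    have h1 := (measurePreserving_add_right volume (x / 2)).quasiMeasurePreserving.ae_eq_comp hvc
    have h2 := (measurePreserving_sub_right volume (x / 2)).quasiMeasurePreserving.ae_eq_comp hvc
    rw [amb, amb]
    apply integral_congr_ae
    filter_upwards [h1, h2] with t e1 e2
    have e1' : v (t + x / 2) = c * u (t + x / 2) := e1
    have e2' : v (t - x / 2) = c * u (t - x / 2) := e2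
    rw [e1', e2', map_mul]
    have e3 : c * u (t + x / 2) * ((starRingEnd ℂ) c * (starRingEnd ℂ) (u (t - x / 2))) =
        u (t + x / 2) * (starRingEnd ℂ) (u (t - x / 2)) := by
      calc c * u (t + x / 2) * ((starRingEnd ℂ) c * (starRingEnd ℂ) (u (t - x / 2)))
          = (c * (starRingEnd ℂ) c) * (u (t + x / 2) * (starRingEnd ℂ) (u (t - x / 2))) := by
            ring
        _ = u (t + x / 2) * (starRingEnd ℂ) (u (t - x / 2)) := by rw [hc1, one_mul]
    rw [e3]
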